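/- Let (a_n) be a real sequence bounded below, (b_n) a sequence of nonnegative reals, and (ε_n), (ρ_n) bounded sequences of nonnegative reals such that ρ_n/ε_n → 0 and ∑ ε_n = ∞. If a_{n+1} ≤ a_n − ε_n b_n + ρ_n for all n ≥ 1, then liminf_{n→∞} b_n = 0. -/
import Mathlib


open Filter

theorem stmt0 (a b ε ρ : ℕ → ℝ)
    (ha : BddBelow (Set.range a))
    (hb : ∀ n, 0 ≤ b n)
    (hε : ∀ n, 0 < ε n) (hεb : BddAbove (Set.range ε))
    (hρ : ∀ n, 0 ≤ ρ n) (hρb : BddAbove (Set.range ρ))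
    (hratio : Tendsto (fun n => ρ n / ε n) atTop (nhds 0))
    (hdiv : Tendsto (fun N => ∑ n ∈ Finset.range N, ε n) atTop atTop)
    (hrec : ∀ n, 1 ≤ n → a (n + 1) ≤ a n - ε n * b n + ρ n) :
    liminf b atTop = 0 := by
  obtain ⟨m, hm⟩ := ha
  have hm' : ∀ n, m ≤ a n := fun n => hm (Set.mem_range_self n)
  have key : ∀ c : ℝ, 0 < c → ∃ᶠ n in atTop, b n < c := by
    intro c hc
    by_contra h
    rw [Filter.not_frequently] at h
    have hρε : ∀ᶠ n in atTop, ρ n / ε n < c / 2 :=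
      hratio.eventually_lt_const (half_pos hc)
    obtain ⟨N, hN⟩ := Filter.eventually_atTop.mp
      ((h.and hρε).and (eventually_ge_atTop 1))
    have step : ∀ n, N ≤ n → a (n + 1) ≤ a n - c / 2 * ε n := by
      intro n hn
      obtain ⟨⟨h1, h2⟩, h3⟩ := hN n hn
      have hbn : c ≤ b n := not_lt.mp h1
      have hρn : ρ n ≤ c / 2 * ε n := by
        have := (div_lt_iff₀ (hε n)).mp h2
        linarith
      have := hrec n h3
      nlinarith [(hε n).le]
    have tel : ∀ k, a (N + k) + c / 2 * ∑ i ∈ Finset.range k, ε (N + i) ≤ a N := by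
      intro k
      induction k with
      | zero => simp
      | succ k ih =>
        have hstep := step (N + k) (by omega)
        rw [Finset.sum_range_succ, show N + (k + 1) = (N + k) + 1 from rfl]
        linarith
    have hT : Tendsto (fun k => ∑ i ∈ Finset.range k, ε (N + i)) atTop atTop := by
      have heq : ∀ k, ∑ i ∈ Finset.range k, ε (N + i)
          = (∑ n ∈ Finset.range (N + k), ε n) - ∑ n ∈ Finset.range N, ε n := by
        intro k
        induction k with
        | zero => simp
        | succ k ih => rw [Finset.sum_range_succ, ih,
            show N + (k + 1) = (N + k) + 1 from rfl, Finset.sum_range_succ]; ring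
      have hS : Tendsto (fun k => ∑ n ∈ Finset.range (N + k), ε n) atTop atTop :=
        hdiv.comp ((tendsto_add_atTop_nat N).congr fun k => Nat.add_comm k N)
      have := tendsto_atTop_add_const_right atTop (-(∑ n ∈ Finset.range N, ε n)) hS
      exact this.congr fun k => by rw [heq k]; ring
    have hT' : Tendsto (fun k => c / 2 * ∑ i ∈ Finset.range k, ε (N + i)) atTop atTop :=
      hT.const_mul_atTop (half_pos hc)
    obtain ⟨k, hk⟩ := (hT'.eventually_ge_atTop (a N - m + 1)).exists
    have := tel k
    have := hm' (N + k)
    linarith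
  have hcobdd : IsCoboundedUnder (· ≥ ·) atTop b :=
    IsCoboundedUnder.of_frequently_le ((key 1 one_pos).mono fun n h => h.le)
  have hbdd : IsBoundedUnder (· ≥ ·) atTop b :=
    isBoundedUnder_of ⟨0, hb⟩
  have hle : liminf b atTop ≤ 0 := by
    refine le_of_forall_pos_le_add fun δ hδ => ?_
    simpa using liminf_le_of_frequently_le ((key δ hδ).mono fun n h => h.le) hbdd
  have hge : (0 : ℝ) ≤ liminf b atTop :=
    le_liminf_of_le hcobdd (Eventually.of_forall hb)
  linarith
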